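/- Let G=(V,E) be a finite simple graph, C* ⊆ V a maximum independent set, and suppose each vertex v ∈ T := {v : deg(v) ≥ Δ} \ C* is independently 'bad' with probability at most exp(−2 ε² deg(v)), where Δ ≥ 3 log(1/ε)/ε² and 0 < ε ≤ 1/4. Then the expected number of bad vertices is at most ε · α(G). -/

import Mathlib

open MeasureTheory Finset ProbabilityTheory

/-- `2x ≤ exp x` for all real `x`. -/
lemma two_mul_le_exp (x : ℝ) : 2 * x ≤ Real.exp x := by
  rcases le_or_gt x 1 with h1 | h1
  · linarith [Real.add_one_le_exp x]
  · have h := Real.add_one_le_exp (x / 2)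
    have h2 : Real.exp x = Real.exp (x / 2) * Real.exp (x / 2) := by
      rw [← Real.exp_add]; ring_nf
    have hp : (0:ℝ) ≤ x / 2 + 1 := by linarith
    have := mul_le_mul h h hp (Real.exp_nonneg _)
    nlinarith [sq_nonneg (x / 2 - 1)]

/-- The key analytic estimate: for `x ≥ Δ ≥ 3 log(1/ε)/ε²` and `0 < ε ≤ 1/4`,
`exp(-2ε²x) ≤ ε/(1+x)`. -/
lemma key_analytic {ε Δ x : ℝ} (hε0 : 0 < ε) (hε : ε ≤ 1/4)
    (hΔ : 3 * Real.log (1/ε) / ε ^ 2 ≤ Δ) (hx : Δ ≤ x) :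
    Real.exp (-2 * ε ^ 2 * x) ≤ ε / (1 + x) := by
  have hε2 : (0:ℝ) < ε ^ 2 := by positivity
  have h4 : (4:ℝ) ≤ 1 / ε := by
    rw [le_div_iff₀ hε0]; linarith
  have hL : 1 ≤ Real.log (1 / ε) := by
    have hlog4 : Real.log 4 = 2 * Real.log 2 := by
      rw [show (4:ℝ) = 2 ^ 2 by norm_num, Real.log_pow]; push_cast; ring
    have h2 : (0.6931471803 : ℝ) < Real.log 2 := Real.log_two_gt_d9
    have : Real.log 4 ≤ Real.log (1 / ε) :=
      Real.log_le_log (by norm_num) h4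
    linarith
  have hΔx : 3 * Real.log (1 / ε) / ε ^ 2 ≤ x := hΔ.trans hx
  have hxL : 3 * Real.log (1 / ε) ≤ ε ^ 2 * x := by
    have := (div_le_iff₀ hε2).mp hΔx
    linarith
  have hεsq : ε ^ 2 ≤ 1 / 16 := by nlinarith
  have hx48 : (48:ℝ) ≤ x := by
    have h1 : (48:ℝ) ≤ 3 / ε ^ 2 := by
      rw [le_div_iff₀ hε2]; nlinarith
    have h2' : (3:ℝ) / ε ^ 2 ≤ 3 * Real.log (1 / ε) / ε ^ 2 := by
      gcongr
      linarith
    linarith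
  set E := Real.exp (ε ^ 2 * x) with hE
  have hEpos : 0 < E := Real.exp_pos _
  have hexp1 : (1 / ε) ^ 3 ≤ E := by
    have h1 : Real.exp (3 * Real.log (1 / ε)) = (1 / ε) ^ 3 := by
      rw [show (3:ℝ) * Real.log (1/ε) = ((3:ℕ):ℝ) * Real.log (1/ε) by norm_num,
        Real.exp_nat_mul, Real.exp_log (by positivity)]
    rw [← h1]
    exact Real.exp_le_exp.mpr hxL
  have hexp1' : 1 ≤ ε ^ 3 * E := by
    have := mul_le_mul_of_nonneg_left hexp1 (by positivity : (0:ℝ) ≤ ε ^ 3)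
    have heq : ε ^ 3 * (1 / ε) ^ 3 = 1 := by field_simp
    linarith
  have hexp2 : 2 * (ε ^ 2 * x) ≤ E := two_mul_le_exp _
  have hgoal : 1 + x ≤ ε * (E * E) := by
    calc 1 + x ≤ 2 * x := by linarith
      _ = 2 * x * 1 := by ring
      _ ≤ 2 * x * (ε ^ 3 * E) := by
          apply mul_le_mul_of_nonneg_left hexp1' (by linarith)
      _ = ε * E * (2 * (ε ^ 2 * x)) := by ring
      _ ≤ ε * E * E := by
          apply mul_le_mul_of_nonneg_left hexp2 (by positivity)
      _ = ε * (E * E) := by ring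
  have hEE : Real.exp (-2 * ε ^ 2 * x) = 1 / (E * E) := by
    rw [show -2 * ε ^ 2 * x = -(ε ^ 2 * x + ε ^ 2 * x) by ring, Real.exp_neg,
      Real.exp_add]
    rw [one_div]
  rw [hEE, div_le_div_iff₀ (by positivity) (by linarith : (0:ℝ) < 1 + x)]
  linarith

/-- Caro–Wei: for any finset `S` of vertices there is an independent set `I ⊆ S` with
`∑_{u ∈ S} 1/(1 + deg_S u) ≤ |I|`, where `deg_S u` counts neighbors inside `S`. -/
lemma caro_wei {V : Type*} [Fintype V] [DecidableEq V]
    (G : SimpleGraph V) [DecidableRel G.Adj] (S : Finset V) :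
    ∃ I : Finset V, I ⊆ S ∧ (∀ u ∈ I, ∀ v ∈ I, ¬ G.Adj u v) ∧
      ∑ u ∈ S, (1:ℝ) / (1 + (S.filter (G.Adj u)).card) ≤ I.card := by
  induction S using Finset.strongInduction with
  | _ S ih =>
    rcases S.eq_empty_or_nonempty with rfl | hne
    · exact ⟨∅, by simp, by simp, by simp⟩
    obtain ⟨v, hvS, hmin⟩ :=
      S.exists_min_image (fun u => ((S.filter (G.Adj u)).card : ℕ)) hne
    set B : Finset V := insert v (S.filter (G.Adj v)) with hB
    have hBS : B ⊆ S := by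
      intro u hu
      rcases Finset.mem_insert.mp hu with rfl | hu
      · exact hvS
      · exact (Finset.mem_filter.mp hu).1
    have hvB : v ∈ B := Finset.mem_insert_self _ _
    have hssub : S \ B ⊂ S := Finset.sdiff_ssubset hBS ⟨v, hvB⟩
    obtain ⟨I', hI'sub, hI'indep, hI'sum⟩ := ih (S \ B) hssub
    have hvI' : v ∉ I' := fun h => (Finset.mem_sdiff.mp (hI'sub h)).2 hvB
    refine ⟨insert v I', ?_, ?_, ?_⟩
    · intro u hu
      rcases Finset.mem_insert.mp hu with rfl | hu
      · exact hvS
      · exact (Finset.mem_sdiff.mp (hI'sub hu)).1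
    · -- independence
      have hnadj : ∀ u ∈ I', ¬ G.Adj v u := by
        intro u hu hadj
        have hu' := Finset.mem_sdiff.mp (hI'sub hu)
        exact hu'.2 (Finset.mem_insert_of_mem (Finset.mem_filter.mpr ⟨hu'.1, hadj⟩))
      intro a ha b hb hadj
      rcases Finset.mem_insert.mp ha with h1 | h1 <;>
        rcases Finset.mem_insert.mp hb with h2 | h2
      · rw [h1, h2] at hadj; exact G.irrefl hadj
      · rw [h1] at hadj; exact hnadj b h2 hadj
      · rw [h2] at hadj; exact hnadj a h1 (G.adj_symm hadj)
      · exact hI'indep a h1 b h2 hadj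
    · -- the sum bound
      have hsplit :
          ∑ u ∈ S, (1:ℝ) / (1 + (S.filter (G.Adj u)).card) =
            ∑ u ∈ S \ B, (1:ℝ) / (1 + (S.filter (G.Adj u)).card) +
            ∑ u ∈ B, (1:ℝ) / (1 + (S.filter (G.Adj u)).card) :=
        (Finset.sum_sdiff hBS).symm
      have hvnotfilter : v ∉ S.filter (G.Adj v) := by
        simp [G.irrefl]
      have hBcard : (B.card : ℝ) = (S.filter (G.Adj v)).card + 1 := by
        rw [hB, Finset.card_insert_of_notMem hvnotfilter]; push_cast; ring
      have hBsum : ∑ u ∈ B, (1:ℝ) / (1 + (S.filter (G.Adj u)).card) ≤ 1 := by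
        have hterm : ∀ u ∈ B,
            (1:ℝ) / (1 + (S.filter (G.Adj u)).card) ≤
              1 / (1 + (S.filter (G.Adj v)).card) := by
          intro u hu
          apply one_div_le_one_div_of_le (by positivity)
          have h : ((S.filter (G.Adj v)).card : ℝ) ≤ (S.filter (G.Adj u)).card := by
            exact_mod_cast hmin u (hBS hu)
          linarith
        calc ∑ u ∈ B, (1:ℝ) / (1 + (S.filter (G.Adj u)).card)
            ≤ ∑ _u ∈ B, (1:ℝ) / (1 + (S.filter (G.Adj v)).card) :=
              Finset.sum_le_sum hterm
          _ = (B.card : ℝ) * (1 / (1 + (S.filter (G.Adj v)).card)) := by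
              rw [Finset.sum_const, nsmul_eq_mul]
          _ = 1 := by
              rw [hBcard]; field_simp; ring
      have hrest : ∑ u ∈ S \ B, (1:ℝ) / (1 + (S.filter (G.Adj u)).card) ≤
          ∑ u ∈ S \ B, (1:ℝ) / (1 + ((S \ B).filter (G.Adj u)).card) := by
        apply Finset.sum_le_sum
        intro u _
        apply one_div_le_one_div_of_le (by positivity)
        have hsub : (S \ B).filter (G.Adj u) ⊆ S.filter (G.Adj u) :=
          Finset.filter_subset_filter _ (Finset.sdiff_subset)
        have h : (((S \ B).filter (G.Adj u)).card : ℝ) ≤ (S.filter (G.Adj u)).card := by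
          exact_mod_cast Finset.card_le_card hsub
        linarith
      have hcard : ((insert v I').card : ℝ) = I'.card + 1 := by
        rw [Finset.card_insert_of_notMem hvI']; push_cast; ring
      rw [hsplit, hcard]
      linarith [hrest.trans hI'sum]

/-- The expected number of bad high-degree vertices outside a maximum independent set
is at most ε·α(G). -/
theorem expected_bad_vertices {V : Type*} [Fintype V] [DecidableEq V]
    (G : SimpleGraph V) [DecidableRel G.Adj]
    (C : Finset V) (hCindep : ∀ u ∈ C, ∀ v ∈ C, ¬ G.Adj u v)
    (hCmax : ∀ D : Finset V, (∀ u ∈ D, ∀ v ∈ D, ¬ G.Adj u v) → D.card ≤ C.card)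
    {ε : ℝ} (hε0 : 0 < ε) (hε : ε ≤ 1/4)
    {Δ : ℝ} (hΔ : 3 * Real.log (1/ε) / ε ^ 2 ≤ Δ)
    {Ω : Type*} [MeasurableSpace Ω] (μ : Measure Ω) [IsProbabilityMeasure μ]
    (X : V → Ω → ℝ) (hmeas : ∀ v, Measurable (X v))
    (hvals : ∀ v ω, X v ω = 0 ∨ X v ω = 1)
    (hbad : ∀ v ∈ Finset.univ.filter (fun v => Δ ≤ (G.degree v : ℝ) ∧ v ∉ C),
      μ {ω | X v ω = 1} ≤ ENNReal.ofReal (Real.exp (-2 * ε ^ 2 * G.degree v)))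
    (hindep : iIndepFun
      (fun v : {v : V // Δ ≤ (G.degree v : ℝ) ∧ v ∉ C} => X v) μ) :
    (∫ ω, ∑ v ∈ Finset.univ.filter (fun v => Δ ≤ (G.degree v : ℝ) ∧ v ∉ C), X v ω ∂μ)
      ≤ ε * C.card := by
  classical
  set T := Finset.univ.filter (fun v => Δ ≤ (G.degree v : ℝ) ∧ v ∉ C) with hT
  set A : V → Set Ω := fun v => {ω | X v ω = 1} with hAdef
  have hA : ∀ v, MeasurableSet (A v) := fun v =>
    (hmeas v) (measurableSet_singleton 1)
  have hXind : ∀ v, X v = (A v).indicator (fun _ => (1:ℝ)) := by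
    intro v
    funext ω
    rcases hvals v ω with h | h
    · rw [h]
      symm
      apply Set.indicator_of_notMem
      simp only [hAdef, Set.mem_setOf_eq, h]
      norm_num
    · rw [h]
      symm
      exact Set.indicator_of_mem (show ω ∈ A v from h) (fun _ => (1:ℝ))
  have hint : ∀ v, Integrable (X v) μ := by
    intro v
    rw [hXind v]
    exact (integrable_const (1:ℝ)).indicator (hA v)
  have hI : ∀ v, ∫ ω, X v ω ∂μ = (μ (A v)).toReal := by
    intro v
    rw [show (fun ω => X v ω) = X v from rfl, hXind v]
    exact integral_indicator_one (hA v)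
  -- Caro–Wei gives an independent set whose size dominates the degree sum
  obtain ⟨I, _, hIindep, hIsum⟩ := caro_wei G (Finset.univ : Finset V)
  have hIC : (I.card : ℝ) ≤ C.card := by exact_mod_cast hCmax I hIindep
  have hdeg : ∀ v : V, ((Finset.univ.filter (G.Adj v)).card : ℝ) = G.degree v := by
    intro v
    rw [← SimpleGraph.neighborFinset_eq_filter]
    rfl
  have hCW : ∑ v : V, (1:ℝ) / (1 + G.degree v) ≤ C.card := by
    refine le_trans ?_ (hIsum.trans hIC)
    apply le_of_eq
    apply Finset.sum_congr rfl
    intro v _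
    rw [hdeg v]
  calc (∫ ω, ∑ v ∈ T, X v ω ∂μ) = ∑ v ∈ T, ∫ ω, X v ω ∂μ :=
        integral_finset_sum T (fun v _ => hint v)
    _ ≤ ∑ v ∈ T, ε * (1 / (1 + (G.degree v : ℝ))) := by
        apply Finset.sum_le_sum
        intro v hv
        have hvT := Finset.mem_filter.mp hv
        have hμ : (μ (A v)).toReal ≤ Real.exp (-2 * ε ^ 2 * G.degree v) :=
          ENNReal.toReal_le_of_le_ofReal (Real.exp_nonneg _) (hbad v hv)
        have hkey := key_analytic hε0 hε hΔ hvT.2.1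
        rw [hI v]
        calc (μ (A v)).toReal ≤ Real.exp (-2 * ε ^ 2 * G.degree v) := hμ
          _ ≤ ε / (1 + (G.degree v : ℝ)) := hkey
          _ = ε * (1 / (1 + (G.degree v : ℝ))) := by ring
    _ = ε * ∑ v ∈ T, (1 / (1 + (G.degree v : ℝ))) := by rw [Finset.mul_sum]
    _ ≤ ε * ∑ v : V, (1 / (1 + (G.degree v : ℝ))) := by
        apply mul_le_mul_of_nonneg_left ?_ hε0.le
        apply Finset.sum_le_sum_of_subset_of_nonneg (Finset.filter_subset _ _)
        intro v _ _
        positivity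
    _ ≤ ε * C.card := mul_le_mul_of_nonneg_left hCW hε0.le
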